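/- Let C ⊆ S^q be a convolutional code with a minimal representation of memory m (i.e., there is a minimal homomorphism of filtered modules G_1 : S^{p_1}[-a_1] → C[0] with max a_1 = m). Then for all d > m, C_{≤d} = C_{≤d−1} + D_1 C_{≤d−1} + ... + D_n C_{≤d−1}. Consequently, C is determined by C_{≤m}: C is the S-submodule of S^q generated by C_{≤m}. -/
import Mathlib


open MvPolynomial

noncomputable section

/-- Polynomials of total degree at most `d`. -/
def polyDegLE (F : Type) [Field F] (n : ℕ) (d : ℤ) :
    Submodule F (MvPolynomial (Fin n) F) where
  carrier := {f | ∀ m ∈ f.support, ((m.sum fun _ e => e : ℕ) : ℤ) ≤ d}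
  add_mem' := fun hf hg m hm =>
    (Finset.mem_union.1 (MvPolynomial.support_add hm)).elim (hf m) (hg m)
  zero_mem' := by simp
  smul_mem' := fun c f hf m hm => hf m (MvPolynomial.support_smul hm)

/-- The filtration `S^p[-a]_{≤ d}`. -/
def filt (F : Type) [Field F] (n p : ℕ) (a : Fin p → ℕ) (d : ℤ) :
    Submodule F (Fin p → MvPolynomial (Fin n) F) :=
  Submodule.pi Set.univ fun i => polyDegLE F n (d - a i)

/-- `C_{≤d} = C ∩ S^q_{≤d}`, as an `F`-subspace of `S^q`. -/
def codeLE (F : Type) [Field F] (n q : ℕ)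
    (C : Submodule (MvPolynomial (Fin n) F) (Fin q → MvPolynomial (Fin n) F))
    (d : ℤ) : Submodule F (Fin q → MvPolynomial (Fin n) F) :=
  (C.restrictScalars F) ⊓ filt F n q (fun _ => 0) d

/-- Multiplication by the variable `D_k` on `S^q`, as an `F`-linear map. -/
def XsmulMap (F : Type) [Field F] (n q : ℕ) (k : Fin n) :
    (Fin q → MvPolynomial (Fin n) F) →ₗ[F] (Fin q → MvPolynomial (Fin n) F) :=
  ((LinearMap.lsmul (MvPolynomial (Fin n) F)
      (Fin q → MvPolynomial (Fin n) F)) (X k)).restrictScalars F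

/-- For a filtration `W` of a submodule of `S^q`, the denominator of the graded
quotient `Γ_d`, namely `W_{≤d−1} + D₁ W_{≤d−1} + ⋯ + Dₙ W_{≤d−1}`. -/
def gammaDen (F : Type) [Field F] (n q : ℕ)
    (W : ℤ → Submodule F (Fin q → MvPolynomial (Fin n) F)) (d : ℤ) :
    Submodule F (Fin q → MvPolynomial (Fin n) F) :=
  W (d - 1) ⊔ ⨆ k : Fin n, (W (d - 1)).map (XsmulMap F n q k)

section helpers

variable (F : Type) [Field F] (n : ℕ)

lemma polyDegLE_mono {d e : ℤ} (h : d ≤ e) : polyDegLE F n d ≤ polyDegLE F n e :=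
  fun _ hf s hs => (hf s hs).trans h

lemma X_mul_mem_polyDegLE {d : ℤ} {f : MvPolynomial (Fin n) F} (k : Fin n)
    (hf : f ∈ polyDegLE F n d) : X k * f ∈ polyDegLE F n (d + 1) := by
  intro s hs
  rw [support_X_mul, Finset.mem_map] at hs
  obtain ⟨t, ht, rfl⟩ := hs
  have := hf t ht
  have hsum : ((Finsupp.single k 1 + t).sum fun _ e => e) =
      ((Finsupp.single k 1).sum fun _ e => e) + (t.sum fun _ e => e) :=
    Finsupp.sum_add_index' (fun _ => rfl) (fun _ _ _ => rfl)
  simp only [addLeftEmbedding_apply]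
  rw [hsum, Finsupp.sum_single_index rfl, Nat.cast_add, Nat.cast_one]
  omega

lemma monomial_mem_polyDegLE {d : ℤ} {s : Fin n →₀ ℕ} {c : F}
    (h : ((s.sum fun _ e => e : ℕ) : ℤ) ≤ d) : monomial s c ∈ polyDegLE F n d := by
  intro t ht
  have := MvPolynomial.support_monomial_subset ht
  rw [Finset.mem_singleton] at this
  subst this; exact h

variable {F n} in
lemma single_X_smul {p : ℕ} (i : Fin p) (k : Fin n) (g : MvPolynomial (Fin n) F) :
    (Pi.single i (X k * g) : Fin p → MvPolynomial (Fin n) F) =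
      (X k : MvPolynomial (Fin n) F) •
        (Pi.single i g : Fin p → MvPolynomial (Fin n) F) := by
  funext j
  by_cases h : j = i
  · subst h; simp
  · simp [Pi.single_eq_of_ne h]

/-- Key decomposition: if `a i < d` for all `i`, then every element of `filt d` lies in
any submodule containing `filt (d-1)` and closed under forming `X k • (filt (d-1))`. -/
lemma filt_le_gamma {p : ℕ} (a : Fin p → ℕ) (d : ℤ) (hd : ∀ i, (a i : ℤ) < d)
    (T : Submodule F (Fin p → MvPolynomial (Fin n) F))
    (hT1 : filt F n p a (d - 1) ≤ T)
    (hT2 : ∀ k : Fin n, ∀ g ∈ filt F n p a (d - 1),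
      (X k : MvPolynomial (Fin n) F) • g ∈ T) :
    filt F n p a d ≤ T := by
  intro f hf
  have hsingle : ∀ i : Fin p, ∀ s : Fin n →₀ ℕ, ∀ c : F,
      ((s.sum fun _ e => e : ℕ) : ℤ) ≤ d - a i →
      (Pi.single i (monomial s c) : Fin p → MvPolynomial (Fin n) F) ∈ T := by
    intro i s c hs
    by_cases h1 : ((s.sum fun _ e => e : ℕ) : ℤ) ≤ d - 1 - a i
    · apply hT1
      intro j _
      by_cases h : j = i
      · subst h
        simpa using monomial_mem_polyDegLE F n h1
      · simp only [Pi.single_eq_of_ne h]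
        exact (polyDegLE F n _).zero_mem
    · -- the degree of `s` is exactly `d - a i ≥ 1`; extract a variable
      have hpos : 0 < (s.sum fun _ e => e : ℕ) := by
        rcases Nat.eq_zero_or_pos (s.sum fun _ e => e) with h0 | h0
        · exfalso
          apply h1
          rw [h0, Nat.cast_zero]
          have := hd i
          omega
        · exact h0
      have hsne : s ≠ 0 := by
        intro h0; rw [h0] at hpos; simp [Finsupp.sum] at hpos
      obtain ⟨k, hk⟩ := Finsupp.ne_iff.1 hsne
      simp only [Finsupp.coe_zero, Pi.zero_apply] at hk
      set s' : Fin n →₀ ℕ := s - Finsupp.single k 1 with hs'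
      have hdec : Finsupp.single k 1 + s' = s := by
        ext j
        simp only [Finsupp.add_apply, Finsupp.tsub_apply, Finsupp.single_apply, hs']
        by_cases hj : k = j
        · subst hj; simp; omega
        · simp [hj]
      have hsum' : (s.sum fun _ e => e : ℕ) = 1 + (s'.sum fun _ e => e : ℕ) := by
        rw [← hdec, Finsupp.sum_add_index' (fun _ => rfl) (fun _ _ _ => rfl),
          Finsupp.sum_single_index rfl]
      have hmon : (monomial s c : MvPolynomial (Fin n) F) = X k * monomial s' c := by
        rw [← hdec, monomial_single_add, pow_one]
      rw [hmon, single_X_smul]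
      apply hT2
      intro j _
      by_cases h : j = i
      · subst h
        simp only [Pi.single_eq_same]
        apply monomial_mem_polyDegLE
        omega
      · simp only [Pi.single_eq_of_ne h]
        exact (polyDegLE F n _).zero_mem
  have hfi : ∀ i : Fin p, (Pi.single i (f i) : Fin p → MvPolynomial (Fin n) F) ∈ T := by
    intro i
    have hms := map_sum (LinearMap.single F (fun _ : Fin p => MvPolynomial (Fin n) F) i)
      (fun v => monomial v (coeff v (f i))) (f i).support
    simp only [LinearMap.single_apply] at hms
    rw [← (f i).support_sum_monomial_coeff, hms]
    apply Submodule.sum_mem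
    intro s hs
    exact hsingle i s _ (hf i (Set.mem_univ i) s hs)
  rw [← Finset.univ_sum_single f]
  exact Submodule.sum_mem _ fun i _ => hfi i

lemma filt_mono {p : ℕ} (a : Fin p → ℕ) {d e : ℤ} (h : d ≤ e) :
    filt F n p a d ≤ filt F n p a e := fun f hf i hi =>
  polyDegLE_mono F n (by omega) (hf i hi)

lemma codeLE_smul {q : ℕ} {C : Submodule (MvPolynomial (Fin n) F)
    (Fin q → MvPolynomial (Fin n) F)} {d : ℤ} (k : Fin n)
    {x : Fin q → MvPolynomial (Fin n) F} (hx : x ∈ codeLE F n q C d) :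
    (X k : MvPolynomial (Fin n) F) • x ∈ codeLE F n q C (d + 1) := by
  refine ⟨C.smul_mem _ hx.1, fun j _ => ?_⟩
  have hj : x j ∈ polyDegLE F n (d - ((0:ℕ):ℤ)) := hx.2 j (Set.mem_univ j)
  have := X_mul_mem_polyDegLE F n k hj
  simpa using this

lemma gammaDen_code_le {q : ℕ} (C : Submodule (MvPolynomial (Fin n) F)
    (Fin q → MvPolynomial (Fin n) F)) (d : ℤ) :
    gammaDen F n q (codeLE F n q C) d ≤ codeLE F n q C d := by
  apply sup_le
  · exact fun x hx => ⟨hx.1, filt_mono F n _ (by omega) hx.2⟩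
  · apply iSup_le
    intro k
    rw [Submodule.map_le_iff_le_comap]
    intro y hy
    have := codeLE_smul F n k hy
    rw [sub_add_cancel] at this
    exact this

end helpers

/-- let `C ⊆ S^q` be a convolutional code with a minimal representation
`u = G₁ : S^{p₁}[-a₁] → C[0]` of memory `m = max a₁` (minimal: surjective on every
filtration level, and inducing bijections on the graded quotients `Γ_d`).  Then for
all `d > m`, `C_{≤d} = C_{≤d−1} + D₁ C_{≤d−1} + ⋯ + Dₙ C_{≤d−1}`; consequently `C`
is recovered from `C_{≤m}`: it is the `S`-submodule generated by `C_{≤m}`. -/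
theorem memory_determines_code (F : Type) [Field F] (n q p₁ : ℕ)
    (a₁ : Fin p₁ → ℕ) (m : ℕ) (hm : m = Finset.univ.sup a₁)
    (C : Submodule (MvPolynomial (Fin n) F) (Fin q → MvPolynomial (Fin n) F))
    (u : (Fin p₁ → MvPolynomial (Fin n) F) →ₗ[MvPolynomial (Fin n) F]
         (Fin q → MvPolynomial (Fin n) F))
    (hrange : LinearMap.range u ≤ C)
    (hfilt : ∀ d : ℤ, ∀ f ∈ filt F n p₁ a₁ d, u f ∈ codeLE F n q C d)
    -- minimality, condition 1: level-wise surjectivity onto `C_{≤d}`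
    (hsurj : ∀ d : ℤ, ∀ c ∈ codeLE F n q C d, ∃ f ∈ filt F n p₁ a₁ d, u f = c)
    -- minimality, condition 2: the induced maps `Γ_d(u)` are bijective
    (hΓinj : ∀ d : ℤ, ∀ f ∈ filt F n p₁ a₁ d,
      u f ∈ gammaDen F n q (codeLE F n q C) d →
        f ∈ gammaDen F n p₁ (filt F n p₁ a₁) d)
    (hΓsurj : ∀ d : ℤ, ∀ c ∈ codeLE F n q C d,
      ∃ f ∈ filt F n p₁ a₁ d, u f - c ∈ gammaDen F n q (codeLE F n q C) d) :
    (∀ d : ℤ, (m : ℤ) < d → codeLE F n q C d = gammaDen F n q (codeLE F n q C) d) ∧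
    C = Submodule.span (MvPolynomial (Fin n) F)
          (codeLE F n q C (m : ℤ) : Set (Fin q → MvPolynomial (Fin n) F)) := by
  have key : ∀ d : ℤ, (m : ℤ) < d →
      codeLE F n q C d = gammaDen F n q (codeLE F n q C) d := by
    intro d hd
    refine le_antisymm ?_ (gammaDen_code_le F n C d)
    intro c hc
    obtain ⟨f, hf, hfu⟩ := hsurj d c hc
    -- f lies in the corresponding graded denominator for the filtration on S^{p₁}[-a₁]
    have hain : ∀ i, (a₁ i : ℤ) < d := by
      intro i
      have : a₁ i ≤ m := hm ▸ Finset.le_sup (Finset.mem_univ i)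
      exact lt_of_le_of_lt (by exact_mod_cast this) hd
    -- u maps the graded denominator into the graded denominator of the code
    have hfd : f ∈ Submodule.comap (u.restrictScalars F)
        (gammaDen F n q (codeLE F n q C) d) := by
      refine filt_le_gamma F n a₁ d hain _ ?_ ?_ hf
      · intro g hg
        exact Submodule.mem_sup_left (hfilt (d - 1) g hg)
      · intro k g hg
        have hmem : u ((X k : MvPolynomial (Fin n) F) • g) ∈
            (codeLE F n q C (d - 1)).map (XsmulMap F n q k) :=
          ⟨u g, hfilt (d - 1) g hg, (u.map_smul (X k) g).symm⟩
        exact Submodule.mem_sup_right (Submodule.mem_iSup_of_mem k hmem)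
    rw [← hfu]
    exact hfd
  refine ⟨key, le_antisymm ?_ (Submodule.span_le.2 fun x hx => hx.1)⟩
  -- C ≤ span of codeLE m
  intro c hc
  set N : ℕ := Finset.univ.sup fun i => (c i).totalDegree with hN
  have hcN : c ∈ codeLE F n q C ((m : ℤ) + N) := by
    refine ⟨hc, fun j _ s hs => ?_⟩
    have h1 : (s.sum fun _ e => e) ≤ (c j).totalDegree := le_totalDegree hs
    have h2 : (c j).totalDegree ≤ N := hN ▸ Finset.le_sup (f := fun i => (c i).totalDegree) (Finset.mem_univ j)
    have h3 : (s.sum fun _ e => e) ≤ N := h1.trans h2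
    simp only [Nat.cast_zero, sub_zero]
    omega
  have hind : ∀ j : ℕ, codeLE F n q C ((m : ℤ) + j) ≤
      (Submodule.span (MvPolynomial (Fin n) F)
        (codeLE F n q C (m : ℤ) : Set (Fin q → MvPolynomial (Fin n) F))).restrictScalars F := by
    intro j
    induction j with
    | zero =>
      intro x hx
      rw [Nat.cast_zero, add_zero] at hx
      exact Submodule.subset_span hx
    | succ j ih =>
      have hlt : (m : ℤ) < (m : ℤ) + (j + 1 : ℕ) := by push_cast; omega
      have hsub : ((m : ℤ) + ((j : ℕ) + 1 : ℕ)) - 1 = (m : ℤ) + j := by push_cast; ring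
      rw [key _ hlt]
      apply sup_le
      · rw [hsub]
        exact ih
      · apply iSup_le
        intro k
        rw [Submodule.map_le_iff_le_comap]
        intro y hy
        rw [hsub] at hy
        exact Submodule.smul_mem _ (X k) (ih hy)
  exact hind N hcN
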